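/- Let f : ℝ → ℝ be measurable, vanishing outside [0,T], with ∫_0^T |f(t)| dt < ∞. For a positive integer m and c ∈ [0,T] set Δ = T/m and f_m(t,c) = f(⌊(t+c)/Δ⌋·Δ − c). Then there exists a sequence m_i → ∞ such that for Lebesgue-almost every c ∈ [0,T], lim_{i→∞} ∫_0^T |f(t) − f_{m_i}(t,c)| dt = 0. -/

import Mathlib

open MeasureTheory Filter Topology
open scoped ENNReal NNReal

section Aux

open Set

/-- Integral of a periodic nonneg function over a period does not depend on the base point. -/
lemma aux_lint_periodic {h : ℝ → ℝ≥0∞} {Δ : ℝ} (hper : Function.Periodic h Δ) (hΔ : 0 < Δ)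
    (a b : ℝ) :
    ∫⁻ x in Ioc a (a + Δ), h x = ∫⁻ x in Ioc b (b + Δ), h x := by
  haveI : VAddInvariantMeasure (AddSubgroup.zmultiples Δ) ℝ volume :=
    ⟨fun c s _ => measure_preimage_add _ _ _⟩
  apply IsAddFundamentalDomain.setLIntegral_eq (G := AddSubgroup.zmultiples Δ)
  exacts [isAddFundamentalDomain_Ioc hΔ a, isAddFundamentalDomain_Ioc hΔ b,
    hper.map_vadd_zmultiples]

/-- Integral of a periodic nonneg function over `m` periods. -/
lemma aux_lint_periodic_nat {h : ℝ → ℝ≥0∞} {Δ : ℝ} (hper : Function.Periodic h Δ) (hΔ : 0 < Δ)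
    (b : ℝ) : ∀ (m : ℕ) (a : ℝ),
    ∫⁻ x in Ioc a (a + m * Δ), h x = m * ∫⁻ x in Ioc b (b + Δ), h x := by
  intro m
  induction m with
  | zero => simp
  | succ n ih =>
    intro a
    have h1 : a + ((n : ℝ) + 1) * Δ = (a + n * Δ) + Δ := by ring
    have h2 : a ≤ a + n * Δ := by
      have : (0:ℝ) ≤ n * Δ := by positivity
      linarith
    have h3 : a + n * Δ ≤ (a + n * Δ) + Δ := by linarith
    push_cast
    rw [h1, ← Set.Ioc_union_Ioc_eq_Ioc h2 h3,
      lintegral_union measurableSet_Ioc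
        (Set.disjoint_left.2 fun x hx hx' => (hx.2.not_gt hx'.1)),
      ih a, aux_lint_periodic hper hΔ (a + n * Δ) b]
    ring

/-- Continuity of translation in `L¹`, in `lintegral` form. -/
lemma aux_translate (f : ℝ → ℝ) (hmeas : Measurable f) (hf : Integrable f) :
    Tendsto (fun s : ℝ => ∫⁻ x, (‖f x - f (x - s)‖₊ : ℝ≥0∞)) (𝓝 0) (𝓝 0) := by
  rw [ENNReal.tendsto_nhds_zero]
  intro ε hε
  set δ3 : ℝ≥0∞ := ε / 3 with hδ3def
  have hδ3 : δ3 ≠ 0 := by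
    simp only [hδ3def, ne_eq, ENNReal.div_eq_zero_iff]
    push_neg
    exact ⟨hε.ne', by norm_num⟩
  obtain ⟨g, gsupp, gbound, gcont, _⟩ := hf.exists_hasCompactSupport_lintegral_sub_le hδ3
  set K : Set ℝ := Metric.cthickening 1 (tsupport g) with hKdef
  have hKc : IsCompact K := gsupp.cthickening
  have hKm : MeasurableSet K := Metric.isClosed_cthickening.measurableSet
  have hKvol : volume K ≠ ∞ := hKc.measure_lt_top.ne
  -- pick η > 0 with ofReal η * volume K ≤ δ3
  obtain ⟨η, hηpos, hηK⟩ : ∃ η : ℝ, 0 < η ∧ ENNReal.ofReal η * volume K ≤ δ3 := by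
    set b : ℝ≥0∞ := min (δ3 / (volume K + 1)) 1 with hbdef
    have hbpos : 0 < b := by
      apply lt_min _ one_pos
      exact ENNReal.div_pos hδ3 (by simp [hKvol])
    have hbne : b ≠ ∞ := by
      simp only [hbdef, ne_eq, min_eq_top, not_and]
      intro _; exact ENNReal.one_ne_top
    refine ⟨b.toReal, ENNReal.toReal_pos hbpos.ne' hbne, ?_⟩
    rw [ENNReal.ofReal_toReal hbne]
    calc b * volume K ≤ (δ3 / (volume K + 1)) * (volume K + 1) := by
          apply mul_le_mul' (min_le_left _ _)
          exact le_add_of_nonneg_right zero_le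
      _ ≤ δ3 := by
          rw [← ENNReal.le_div_iff_mul_le (Or.inl (by simp)) (Or.inl (by simp [hKvol]))]
  -- uniform continuity of g
  have hgu : UniformContinuous g := gsupp.uniformContinuous_of_continuous gcont
  obtain ⟨δ, hδpos, hδ⟩ := Metric.uniformContinuous_iff.1 hgu η hηpos
  -- eventual bound
  filter_upwards [Metric.ball_mem_nhds (0:ℝ) (lt_min hδpos one_pos)] with s hs
  rw [Metric.mem_ball, Real.dist_eq, sub_zero] at hs
  have hsδ : |s| < δ := hs.trans_le (min_le_left _ _)
  have hs1 : |s| ≤ 1 := (hs.trans_le (min_le_right _ _)).le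
  -- measurable pieces
  have m1 : Measurable fun x => (‖f x - g x‖₊ : ℝ≥0∞) := (hmeas.sub gcont.measurable).nnnorm.coe_nnreal_ennreal
  have m2 : Measurable fun x => (‖g x - g (x - s)‖₊ : ℝ≥0∞) :=
    (gcont.measurable.sub (gcont.measurable.comp (measurable_id.sub measurable_const))).nnnorm.coe_nnreal_ennreal
  have m3 : Measurable fun x => (‖g (x - s) - f (x - s)‖₊ : ℝ≥0∞) :=
    ((gcont.measurable.comp (measurable_id.sub measurable_const)).sub
      (hmeas.comp (measurable_id.sub measurable_const))).nnnorm.coe_nnreal_ennreal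
  have tri : ∀ x : ℝ, (‖f x - f (x - s)‖₊ : ℝ≥0∞) ≤
      (‖f x - g x‖₊ : ℝ≥0∞) + (‖g x - g (x - s)‖₊ : ℝ≥0∞) + (‖g (x - s) - f (x - s)‖₊ : ℝ≥0∞) := by
    intro x
    have : ‖f x - f (x - s)‖₊ ≤ ‖f x - g x‖₊ + ‖g x - g (x - s)‖₊ + ‖g (x - s) - f (x - s)‖₊ := by
      calc ‖f x - f (x - s)‖₊
          = ‖(f x - g x) + (g x - g (x - s)) + (g (x - s) - f (x - s))‖₊ := by ring_nf
        _ ≤ _ := (nnnorm_add_le _ _).trans (add_le_add (nnnorm_add_le _ _) le_rfl)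
    exact_mod_cast this
  calc ∫⁻ x, (‖f x - f (x - s)‖₊ : ℝ≥0∞)
      ≤ ∫⁻ x, ((‖f x - g x‖₊ : ℝ≥0∞) + (‖g x - g (x - s)‖₊ : ℝ≥0∞)
          + (‖g (x - s) - f (x - s)‖₊ : ℝ≥0∞)) := lintegral_mono tri
    _ = (∫⁻ x, (‖f x - g x‖₊ : ℝ≥0∞)) + (∫⁻ x, (‖g x - g (x - s)‖₊ : ℝ≥0∞))
          + ∫⁻ x, (‖g (x - s) - f (x - s)‖₊ : ℝ≥0∞) := by
        rw [lintegral_add_right _ m3, lintegral_add_right _ m2]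
    _ ≤ δ3 + δ3 + δ3 := by
        gcongr
        · exact gbound
        · -- middle term
          have hpt : ∀ x : ℝ, (‖g x - g (x - s)‖₊ : ℝ≥0∞) ≤ K.indicator (fun _ => ENNReal.ofReal η) x := by
            intro x
            by_cases hx : x ∈ K
            · rw [Set.indicator_of_mem hx]
              rw [show ((‖g x - g (x - s)‖₊ : ℝ≥0∞)) = ENNReal.ofReal ‖g x - g (x - s)‖ from (ofReal_norm _).symm]
              apply ENNReal.ofReal_le_ofReal
              have : dist (g x) (g (x - s)) < η := by
                apply hδ
                rw [Real.dist_eq]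
                simpa using hsδ
              rw [← dist_eq_norm]
              exact this.le
            · rw [Set.indicator_of_notMem hx]
              have hx1 : x ∉ tsupport g := fun h => hx (Metric.self_subset_cthickening _ h)
              have hx2 : x - s ∉ tsupport g := by
                intro h
                apply hx
                exact Metric.mem_cthickening_of_dist_le x (x - s) 1 _ h (by rw [Real.dist_eq, sub_sub_cancel]; exact hs1)
              rw [image_eq_zero_of_notMem_tsupport hx1, image_eq_zero_of_notMem_tsupport hx2]
              simp
          calc ∫⁻ x, (‖g x - g (x - s)‖₊ : ℝ≥0∞)
              ≤ ∫⁻ x, K.indicator (fun _ => ENNReal.ofReal η) x := lintegral_mono hpt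
            _ = ENNReal.ofReal η * volume K := lintegral_indicator_const hKm _
            _ ≤ δ3 := hηK
        · -- third term
          have := (measurePreserving_add_right volume (-s)).lintegral_comp_emb
            (measurableEmbedding_addRight (-s)) (fun x => (‖g x - f x‖₊ : ℝ≥0∞))
          calc ∫⁻ x, (‖g (x - s) - f (x - s)‖₊ : ℝ≥0∞)
              = ∫⁻ x, (‖g x - f x‖₊ : ℝ≥0∞) := by
                simp only [sub_eq_add_neg] at this ⊢
                exact this
            _ = ∫⁻ x, (‖f x - g x‖₊ : ℝ≥0∞) := by simp_rw [← neg_sub (f _) (g _), nnnorm_neg]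
            _ ≤ δ3 := gbound
    _ ≤ ε := by
        rw [hδ3def]
        rcases eq_or_ne ε ∞ with h | h
        · simp [h]
        · have h3 : ε + ε + ε = 3 * ε := by
            rw [show (3:ℝ≥0∞) = 1 + 1 + 1 by norm_num, add_mul, add_mul, one_mul]
          have : ε / 3 + ε / 3 + ε / 3 = ε := by
            rw [ENNReal.div_add_div_same, ENNReal.div_add_div_same, h3, mul_comm,
              mul_div_assoc, ENNReal.div_self (by norm_num) (by norm_num), mul_one]
          exact this.le

end Aux

/-- For an integrable `f` supported in `[0,T]`, there is a sequence of mesh numbers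
`m i → ∞` such that for Lebesgue-almost every shift `c ∈ [0,T]` the piecewise-constant
discretizations `f_m(t,c) = f(⌊(t+c)/Δ⌋Δ - c)`, `Δ = T/m`, converge to `f` in
`L¹([0,T])`. -/
theorem stmt_1 (T : ℝ) (hT : 0 < T) (f : ℝ → ℝ) (hmeas : Measurable f)
    (hsupp : ∀ t, t ∉ Set.Icc 0 T → f t = 0)
    (hint : IntegrableOn f (Set.Icc 0 T)) :
    ∃ m : ℕ → ℕ, Tendsto m atTop atTop ∧
      ∀ᵐ c ∂(volume.restrict (Set.Icc (0 : ℝ) T)),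
        Tendsto (fun i => ∫ t in (0:ℝ)..T,
            |f t - f ((⌊(t + c) / (T / (m i : ℝ))⌋ : ℝ) * (T / (m i : ℝ)) - c)|)
          atTop (nhds 0) := by
  -- global integrability
  have hfind : f = (Set.Icc (0:ℝ) T).indicator f := by
    ext x
    by_cases hx : x ∈ Set.Icc (0:ℝ) T
    · rw [Set.indicator_of_mem hx]
    · rw [Set.indicator_of_notMem hx, hsupp x hx]
  have hfint : Integrable f := by
    rw [hfind]; exact hint.integrable_indicator measurableSet_Icc
  -- the error functional
  set Φ : ℕ → ℝ → ℝ≥0∞ := fun n c => ∫⁻ t in Set.Ioc (0:ℝ) T,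
    (‖f t - f ((⌊(t + c) / (T / (n:ℝ))⌋ : ℝ) * (T / (n:ℝ)) - c)‖₊ : ℝ≥0∞) with hΦdef
  -- product measurability
  have hprodmeas : ∀ n : ℕ, Measurable fun p : ℝ × ℝ =>
      (‖f p.2 - f ((⌊(p.2 + p.1) / (T / (n:ℝ))⌋ : ℝ) * (T / (n:ℝ)) - p.1)‖₊ : ℝ≥0∞) := by
    intro n
    have h1 : Measurable fun p : ℝ × ℝ => (p.2 + p.1) / (T / (n:ℝ)) :=
      (measurable_snd.add measurable_fst).div_const _
    have h2 : Measurable fun p : ℝ × ℝ => ((⌊(p.2 + p.1) / (T / (n:ℝ))⌋ : ℝ)) :=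
      measurable_from_top.comp h1.floor
    exact ((hmeas.comp measurable_snd).sub
      (hmeas.comp ((h2.mul_const _).sub measurable_fst))).nnnorm.coe_nnreal_ennreal
  have hΦmeas : ∀ n : ℕ, Measurable (Φ n) := by
    intro n
    exact (hprodmeas n).lintegral_prod_right'
  -- Step A : the mean over c of Φ n tends to 0
  have key : Tendsto (fun n => ∫⁻ c in Set.Ioc (0:ℝ) T, Φ n c) atTop (𝓝 0) := by
    rw [ENNReal.tendsto_nhds_zero]
    intro ε hε
    set ε' : ℝ≥0∞ := ε / ENNReal.ofReal T with hε'def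
    have hε' : 0 < ε' := ENNReal.div_pos hε.ne' ENNReal.ofReal_ne_top
    have hω := ENNReal.tendsto_nhds_zero.1 (aux_translate f hmeas hfint) ε' hε'
    rw [Metric.eventually_nhds_iff] at hω
    obtain ⟨δ, hδpos, hδ⟩ := hω
    filter_upwards [eventually_gt_atTop ⌈T / δ⌉₊] with n hn
    have hn1 : 1 ≤ n := Nat.one_le_iff_ne_zero.2 (by rintro rfl; exact Nat.not_lt_zero _ hn)
    have hnpos : (0:ℝ) < n := by exact_mod_cast hn1
    set Δ : ℝ := T / n with hΔdef
    have hΔpos : 0 < Δ := div_pos hT hnpos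
    have hΔne : Δ ≠ 0 := hΔpos.ne'
    have hnΔ : (n:ℝ) * Δ = T := by rw [hΔdef]; field_simp
    have hΔδ : Δ < δ := by
      rw [hΔdef, div_lt_iff₀ hnpos]
      have h1 : T / δ < n := by
        calc T / δ ≤ ⌈T / δ⌉₊ := Nat.le_ceil _
          _ < n := by exact_mod_cast hn
      calc T = (T / δ) * δ := by field_simp
        _ < n * δ := by
            apply mul_lt_mul_of_pos_right h1 hδpos
        _ = δ * n := by ring
    -- rewrite the argument via fract
    have harg : ∀ t c : ℝ, (⌊(t + c) / Δ⌋ : ℝ) * Δ - c = t - Δ * Int.fract ((t + c) / Δ) := by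
      intro t c
      rw [Int.fract]
      field_simp
      ring
    -- the inner-c computation for each t
    have hinner : ∀ t : ℝ,
        ∫⁻ c in Set.Ioc (0:ℝ) T, (‖f t - f (t - Δ * Int.fract ((t + c) / Δ))‖₊ : ℝ≥0∞)
          = (n : ℝ≥0∞) * ∫⁻ s in Set.Ioc (0:ℝ) Δ, (‖f t - f (t - s)‖₊ : ℝ≥0∞) := by
      intro t
      have hper : Function.Periodic
          (fun c => (‖f t - f (t - Δ * Int.fract ((t + c) / Δ))‖₊ : ℝ≥0∞)) Δ := by
        intro c
        have hq : (t + (c + Δ)) / Δ = (t + c) / Δ + 1 := by field_simp; ring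
        simp only [hq, Int.fract_add_one]
      have step1 : ∫⁻ c in Set.Ioc (0:ℝ) T,
            (‖f t - f (t - Δ * Int.fract ((t + c) / Δ))‖₊ : ℝ≥0∞)
          = (n:ℝ≥0∞) * ∫⁻ c in Set.Ioc (-t) (-t + Δ),
            (‖f t - f (t - Δ * Int.fract ((t + c) / Δ))‖₊ : ℝ≥0∞) := by
        have hT' : (0:ℝ) + (n:ℝ) * Δ = T := by rw [hnΔ]; ring
        rw [← hT']
        simpa using aux_lint_periodic_nat hper hΔpos (-t) n 0
      have step2 : ∫⁻ c in Set.Ioc (-t) (-t + Δ),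
            (‖f t - f (t - Δ * Int.fract ((t + c) / Δ))‖₊ : ℝ≥0∞)
          = ∫⁻ c in Set.Ioo (-t) (-t + Δ),
            (‖f t - f (t - Δ * Int.fract ((t + c) / Δ))‖₊ : ℝ≥0∞) := by
        rw [Measure.restrict_congr_set Ioo_ae_eq_Ioc.symm]
      have step3 : ∫⁻ c in Set.Ioo (-t) (-t + Δ),
            (‖f t - f (t - Δ * Int.fract ((t + c) / Δ))‖₊ : ℝ≥0∞)
          = ∫⁻ c in Set.Ioo (-t) (-t + Δ), (‖f t - f (-c)‖₊ : ℝ≥0∞) := by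
        apply setLIntegral_congr_fun measurableSet_Ioo
        intro c hc
        have h1 : 0 < t + c := by have := hc.1; linarith
        have h2 : t + c < Δ := by have := hc.2; linarith
        have hfr : Int.fract ((t + c) / Δ) = (t + c) / Δ := by
          rw [Int.fract_eq_self]
          constructor
          · positivity
          · rw [div_lt_one hΔpos]; exact h2
        beta_reduce
        rw [hfr, mul_div_cancel₀ _ hΔne]
        ring_nf
      have step4 : ∫⁻ c in Set.Ioo (-t) (-t + Δ), (‖f t - f (-c)‖₊ : ℝ≥0∞)
          = ∫⁻ s in Set.Ioo (0:ℝ) Δ, (‖f t - f (t - s)‖₊ : ℝ≥0∞) := by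
        have hpre : (fun c : ℝ => c + t) ⁻¹' Set.Ioo (0:ℝ) Δ = Set.Ioo (-t) (-t + Δ) := by
          rw [Set.preimage_add_const_Ioo]
          congr 1 <;> ring
        have := (measurePreserving_add_right volume t).setLIntegral_comp_preimage_emb
          (measurableEmbedding_addRight t) (fun s => (‖f t - f (t - s)‖₊ : ℝ≥0∞))
          (Set.Ioo 0 Δ)
        rw [hpre] at this
        rw [← this]
        apply setLIntegral_congr_fun measurableSet_Ioo
        intro c _
        have : t - (c + t) = -c := by ring
        beta_reduce
        rw [this]
      have step5 : ∫⁻ s in Set.Ioo (0:ℝ) Δ, (‖f t - f (t - s)‖₊ : ℝ≥0∞)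
          = ∫⁻ s in Set.Ioc (0:ℝ) Δ, (‖f t - f (t - s)‖₊ : ℝ≥0∞) := by
        rw [Measure.restrict_congr_set Ioo_ae_eq_Ioc]
      rw [step1, step2, step3, step4, step5]
    -- now assemble, using Tonelli twice
    have swap1 : ∫⁻ c in Set.Ioc (0:ℝ) T, Φ n c
        = ∫⁻ t in Set.Ioc (0:ℝ) T, ∫⁻ c in Set.Ioc (0:ℝ) T,
            (‖f t - f (t - Δ * Int.fract ((t + c) / Δ))‖₊ : ℝ≥0∞) := by
      have := lintegral_lintegral_swap (μ := volume.restrict (Set.Ioc (0:ℝ) T))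
        (ν := volume.restrict (Set.Ioc (0:ℝ) T))
        (f := fun c t => (‖f t - f ((⌊(t + c) / Δ⌋ : ℝ) * Δ - c)‖₊ : ℝ≥0∞))
        ((hprodmeas n).aemeasurable)
      rw [hΦdef]
      simp only [← hΔdef] at this ⊢
      rw [this]
      congr 1
      ext t
      congr 1
      ext c
      rw [harg t c]
    have swap2 : ∫⁻ t in Set.Ioc (0:ℝ) T, ∫⁻ s in Set.Ioc (0:ℝ) Δ, (‖f t - f (t - s)‖₊ : ℝ≥0∞)
        = ∫⁻ s in Set.Ioc (0:ℝ) Δ, ∫⁻ t in Set.Ioc (0:ℝ) T, (‖f t - f (t - s)‖₊ : ℝ≥0∞) := by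
      exact lintegral_lintegral_swap
        (((hmeas.comp measurable_fst).sub
          (hmeas.comp (measurable_fst.sub measurable_snd))).nnnorm.coe_nnreal_ennreal).aemeasurable
    calc ∫⁻ c in Set.Ioc (0:ℝ) T, Φ n c
        = ∫⁻ t in Set.Ioc (0:ℝ) T, ∫⁻ c in Set.Ioc (0:ℝ) T,
            (‖f t - f (t - Δ * Int.fract ((t + c) / Δ))‖₊ : ℝ≥0∞) := swap1
      _ = ∫⁻ t in Set.Ioc (0:ℝ) T,
            (n : ℝ≥0∞) * ∫⁻ s in Set.Ioc (0:ℝ) Δ, (‖f t - f (t - s)‖₊ : ℝ≥0∞) := by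
          apply lintegral_congr
          intro t
          exact hinner t
      _ = (n : ℝ≥0∞) * ∫⁻ t in Set.Ioc (0:ℝ) T,
            ∫⁻ s in Set.Ioc (0:ℝ) Δ, (‖f t - f (t - s)‖₊ : ℝ≥0∞) := by
          rw [lintegral_const_mul]
          exact (((hmeas.comp measurable_fst).sub
            (hmeas.comp (measurable_fst.sub measurable_snd))).nnnorm.coe_nnreal_ennreal).lintegral_prod_right'
      _ = (n : ℝ≥0∞) * ∫⁻ s in Set.Ioc (0:ℝ) Δ,
            ∫⁻ t in Set.Ioc (0:ℝ) T, (‖f t - f (t - s)‖₊ : ℝ≥0∞) := by rw [swap2]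
      _ ≤ (n : ℝ≥0∞) * ∫⁻ _ in Set.Ioc (0:ℝ) Δ, ε' := by
          apply mul_le_mul_right
          apply setLIntegral_mono measurable_const
          intro s hs
          calc ∫⁻ t in Set.Ioc (0:ℝ) T, (‖f t - f (t - s)‖₊ : ℝ≥0∞)
              ≤ ∫⁻ t, (‖f t - f (t - s)‖₊ : ℝ≥0∞) := setLIntegral_le_lintegral _ _
            _ ≤ ε' := by
                apply hδ
                rw [Real.dist_eq, sub_zero]
                rw [abs_of_pos hs.1]
                exact lt_of_le_of_lt hs.2 hΔδ
      _ = (n : ℝ≥0∞) * (ε' * ENNReal.ofReal Δ) := by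
          rw [setLIntegral_const, Real.volume_Ioc, sub_zero]
      _ = ε' * ENNReal.ofReal T := by
          rw [← hnΔ, ENNReal.ofReal_mul (by positivity), ENNReal.ofReal_natCast]
          ring
      _ ≤ ε := by
          rw [hε'def, ENNReal.div_mul_cancel (by simpa using hT) ENNReal.ofReal_ne_top]
  -- Step B : extract a subsequence
  have hhalf : ∀ i : ℕ, (0:ℝ≥0∞) < 2⁻¹ ^ i := by
    intro i
    apply ENNReal.pow_pos
    simp
  have hP : ∀ i : ℕ, ∃ n : ℕ, i ≤ n ∧ ∫⁻ c in Set.Ioc (0:ℝ) T, Φ n c ≤ 2⁻¹ ^ i := by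
    intro i
    have h1 := eventually_ge_atTop i
    have h2 := ENNReal.tendsto_nhds_zero.1 key (2⁻¹ ^ i) (hhalf i)
    exact (h1.and h2).exists
  choose m hm₁ hm₂ using hP
  refine ⟨m, tendsto_atTop_mono hm₁ tendsto_id, ?_⟩
  -- sum of errors is finite
  have htsum : ∫⁻ c in Set.Ioc (0:ℝ) T, ∑' i, Φ (m i) c
      = ∑' i, ∫⁻ c in Set.Ioc (0:ℝ) T, Φ (m i) c :=
    lintegral_tsum fun i => (hΦmeas (m i)).aemeasurable
  have hfin : ∫⁻ c in Set.Ioc (0:ℝ) T, (∑' i, Φ (m i) c) ≠ ∞ := by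
    rw [htsum]
    apply ne_of_lt
    calc ∑' i, ∫⁻ c in Set.Ioc (0:ℝ) T, Φ (m i) c ≤ ∑' i : ℕ, (2⁻¹:ℝ≥0∞) ^ i :=
          ENNReal.tsum_le_tsum hm₂
      _ = 2 := by
          rw [ENNReal.tsum_geometric, ENNReal.one_sub_inv_two, inv_inv]
      _ < ∞ := ENNReal.ofNat_lt_top
  have hae : ∀ᵐ c ∂(volume.restrict (Set.Ioc (0:ℝ) T)), (∑' i, Φ (m i) c) ≠ ∞ := by
    have hmeasSum : Measurable fun c => ∑' i, Φ (m i) c :=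
      Measurable.ennreal_tsum fun i => hΦmeas (m i)
    filter_upwards [ae_lt_top hmeasSum hfin] with c hc using hc.ne
  have hres : volume.restrict (Set.Icc (0:ℝ) T) = volume.restrict (Set.Ioc (0:ℝ) T) :=
    (Measure.restrict_congr_set Ioc_ae_eq_Icc).symm
  rw [hres]
  filter_upwards [hae] with c hc
  have h0 : Tendsto (fun i => Φ (m i) c) atTop (𝓝 0) :=
    ENNReal.tendsto_atTop_zero_of_tsum_ne_top hc
  -- convert to the real-valued statement
  have heq : ∀ i : ℕ, ∫ t in (0:ℝ)..T,
      |f t - f ((⌊(t + c) / (T / (m i : ℝ))⌋ : ℝ) * (T / (m i : ℝ)) - c)| = (Φ (m i) c).toReal := by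
    intro i
    have hmg : Measurable fun t =>
        f t - f ((⌊(t + c) / (T / (m i : ℝ))⌋ : ℝ) * (T / (m i : ℝ)) - c) := by
      have h1 : Measurable fun t : ℝ => (t + c) / (T / (m i : ℝ)) :=
        (measurable_id.add_const _).div_const _
      have h2 : Measurable fun t : ℝ => ((⌊(t + c) / (T / (m i : ℝ))⌋ : ℝ)) :=
        measurable_from_top.comp h1.floor
      exact hmeas.sub (hmeas.comp ((h2.mul_const _).sub_const _))
    rw [intervalIntegral.integral_of_le hT.le]
    rw [integral_eq_lintegral_of_nonneg_ae (ae_of_all _ fun t => abs_nonneg _)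
      hmg.abs.aestronglyMeasurable]
    congr 1
    apply lintegral_congr
    intro t
    rw [← Real.enorm_eq_ofReal_abs]
    rfl
  have : Tendsto (fun i => (Φ (m i) c).toReal) atTop (𝓝 0) := by
    have := (ENNReal.tendsto_toReal (a := 0) (by simp)).comp h0
    simpa [Function.comp_def] using this
  exact Tendsto.congr (fun i => (heq i).symm) this
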